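/- Let P(X) = X³ − X²(i+j+k) + X(i−j+k) + 1 and Q(X) = 2X³ − 2X²(i+j) + 2Xk in ℍ[X], with derivatives P'(X) = 3X² − 2X(i+j+k) + (i−j+k) and Q'(X) = 6X² − 4X(i+j) + 2k. Then for y = (1 + 9i + 4j − √2 k)/10 one has |y| = 1, |P'(y)|² = (7/25)(5+√2), and |Q'(y)|² = (4/25)(10−3√2); in particular |P'(y)| > |Q'(y)|. -/

import Mathlib

noncomputable def qi : Quaternion ℝ := ⟨0, 1, 0, 0⟩
noncomputable def qj : Quaternion ℝ := ⟨0, 0, 1, 0⟩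
noncomputable def qk : Quaternion ℝ := ⟨0, 0, 0, 1⟩

lemma norm_sq_q (q : Quaternion ℝ) : ‖q‖^2 = q.re^2 + q.imI^2 + q.imJ^2 + q.imK^2 := by
  rw [sq, ← Quaternion.normSq_eq_norm_mul_self, Quaternion.normSq_def']

lemma qnum (n : ℕ) [n.AtLeastTwo] :
    (OfNat.ofNat n : Quaternion ℝ) = ⟨(OfNat.ofNat n : ℝ),0,0,0⟩ := by
  rw [show (OfNat.ofNat n : Quaternion ℝ) = ((OfNat.ofNat n : ℝ) : Quaternion ℝ) by norm_cast]
  rfl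

/-- With `P'(X) = 3X² − 2X(i+j+k) + (i−j+k)` and `Q'(X) = 6X² − 4X(i+j) + 2k`,
for `y = (1 + 9i + 4j − √2 k)/10` one has `‖y‖ = 1`,
`‖P'(y)‖² = (7/25)(5+√2)`, `‖Q'(y)‖² = (4/25)(10−3√2)`, and `‖P'(y)‖ > ‖Q'(y)‖`. -/
theorem counterexample_derivative_comparison :
    let y : Quaternion ℝ := ⟨1/10, 9/10, 4/10, -(Real.sqrt 2)/10⟩
    ‖y‖ = 1 ∧
    ‖y ^ 2 * 3 - y * (2 * (qi + qj + qk)) + (qi - qj + qk)‖ ^ 2 = (7/25) * (5 + Real.sqrt 2) ∧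
    ‖y ^ 2 * 6 - y * (4 * (qi + qj)) + 2 * qk‖ ^ 2 = (4/25) * (10 - 3 * Real.sqrt 2) ∧
    ‖y ^ 2 * 6 - y * (4 * (qi + qj)) + 2 * qk‖ <
      ‖y ^ 2 * 3 - y * (2 * (qi + qj + qk)) + (qi - qj + qk)‖ := by
  intro y
  have hs : Real.sqrt 2 * Real.sqrt 2 = 2 := Real.mul_self_sqrt (by norm_num)
  have hsn : (0:ℝ) ≤ Real.sqrt 2 := Real.sqrt_nonneg 2
  have hP : ‖y ^ 2 * 3 - y * (2 * (qi + qj + qk)) + (qi - qj + qk)‖ ^ 2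
      = (7/25) * (5 + Real.sqrt 2) := by
    rw [norm_sq_q]
    simp only [pow_two, Quaternion.re_mul, Quaternion.imI_mul,
      Quaternion.imJ_mul, Quaternion.imK_mul, Quaternion.re_add, Quaternion.imI_add,
      Quaternion.imJ_add, Quaternion.imK_add, Quaternion.re_sub, Quaternion.imI_sub,
      Quaternion.imJ_sub, Quaternion.imK_sub]
    simp only [y, qi, qj, qk, qnum]
    ring_nf
    nlinarith [hs, hsn]
  have hQ : ‖y ^ 2 * 6 - y * (4 * (qi + qj)) + 2 * qk‖ ^ 2
      = (4/25) * (10 - 3 * Real.sqrt 2) := by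
    rw [norm_sq_q]
    simp only [pow_two, Quaternion.re_mul, Quaternion.imI_mul,
      Quaternion.imJ_mul, Quaternion.imK_mul, Quaternion.re_add, Quaternion.imI_add,
      Quaternion.imJ_add, Quaternion.imK_add, Quaternion.re_sub, Quaternion.imI_sub,
      Quaternion.imJ_sub, Quaternion.imK_sub]
    simp only [y, qi, qj, qk, qnum]
    ring_nf
    nlinarith [hs, hsn]
  have hy : ‖y‖ ^ 2 = 1 := by
    rw [norm_sq_q]
    simp only [y]
    nlinarith [hs]
  refine ⟨?_, hP, hQ, ?_⟩
  · rw [← Real.sqrt_sq (norm_nonneg y), hy, Real.sqrt_one]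
  · rw [← Real.sqrt_sq (norm_nonneg (y ^ 2 * 6 - y * (4 * (qi + qj)) + 2 * qk)),
      ← Real.sqrt_sq (norm_nonneg (y ^ 2 * 3 - y * (2 * (qi + qj + qk)) + (qi - qj + qk)))]
    apply Real.sqrt_lt_sqrt (by positivity)
    rw [hP, hQ]
    nlinarith [hs, hsn]
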